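/- For every s ≥ 0 and every γ ≥ 0, (γ e^{s} + e^{−γ s}) / (1 + γ) ≤ 1 + γ (e^{s} − 1 − s). -/
import Mathlib

open Real

/-- Appendix A.1 of the paper: the refined Bennett moment-generating-function estimator
`(γ e^s + e^{-γs})/(1+γ)` is dominated by the Bennett/Jebara estimator
`1 + γ(e^s − 1 − s)`. -/
theorem refined_bennett_le_jebara
    (s γ : ℝ) (hs : 0 ≤ s) (hγ : 0 ≤ γ) :
    (γ * Real.exp s + Real.exp (-(γ * s))) / (1 + γ) ≤
      1 + γ * (Real.exp s - 1 - s) := by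
  have hpos : (0:ℝ) < 1 + γ := by linarith
  rw [div_le_iff₀ hpos]
  have hx : 0 ≤ γ * s := mul_nonneg hγ hs
  have h1 : 1 + γ * s + (γ * s) ^ 2 / 2 ≤ Real.exp (γ * s) :=
    Real.quadratic_le_exp_of_nonneg hx
  have h2 : 1 + s + s ^ 2 / 2 ≤ Real.exp s :=
    Real.quadratic_le_exp_of_nonneg hs
  have h3 : Real.exp (-(γ * s)) * Real.exp (γ * s) = 1 := by
    rw [← Real.exp_add]; simp
  have h4 : 0 < Real.exp (-(γ * s)) := Real.exp_pos _
  have h5 : Real.exp (-(γ * s)) ≤ 1 - γ * s + (γ * s) ^ 2 / 2 := by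
    nlinarith [Real.exp_pos (γ * s), sq_nonneg (γ * s), sq_nonneg ((γ*s)^2)]
  nlinarith [mul_nonneg (mul_nonneg hγ hγ) (sq_nonneg s)]
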